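/- For all positive integers m and n and all real x, B_{m+n}(x) = -C(m+n, m)·( ∫_0^1 B_m(x-t) B_n(t) dt + m·∫_x^1 (x-t)^{m-1} B_n(t) dt ), where B_k denotes the k-th Bernoulli polynomial and C(m+n,m) is the binomial coefficient. -/

import Mathlib

open Polynomial MeasureTheory intervalIntegral

noncomputable def BB (k : ℕ) : Polynomial ℝ := (Polynomial.bernoulli k).map (algebraMap ℚ ℝ)

lemma BB_zero : BB 0 = 1 := by simp [BB]

lemma BB_cont (k : ℕ) : Continuous fun t : ℝ => (BB k).eval t := (BB k).continuous

lemma BB_deriv (k : ℕ) (y : ℝ) :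
    HasDerivAt (fun s : ℝ => (BB (k+1)).eval s) (((k:ℝ)+1) * (BB k).eval y) y := by
  have h := (BB (k+1)).hasDerivAt y
  have hd : Polynomial.derivative (BB (k+1)) = Polynomial.C ((k:ℝ)+1) * BB k := by
    unfold BB
    rw [Polynomial.derivative_map, Polynomial.derivative_bernoulli_add_one, Polynomial.map_mul]
    congr 1
    simp
  rw [hd] at h
  simpa using h

lemma BB_deriv' (n : ℕ) (t : ℝ) :
    HasDerivAt (fun s : ℝ => (BB (n+2)).eval s) (((n:ℝ)+2) * (BB (n+1)).eval t) t := by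
  have h : ((n:ℝ)+2) = ((n+1:ℕ):ℝ)+1 := by push_cast; ring
  rw [h]
  exact BB_deriv (n+1) t

lemma BB_one_add (k : ℕ) (y : ℝ) :
    (BB k).eval (1 + y) = (BB k).eval y + k * y ^ (k-1) := by
  have hq : (Polynomial.bernoulli k).comp (1 + X) =
      Polynomial.bernoulli k + (k : ℚ[X]) * X ^ (k-1) := by
    apply Polynomial.funext
    intro z
    simp [Polynomial.eval_comp, Polynomial.bernoulli_eval_one_add]
  have h1 := congrArg (Polynomial.map (algebraMap ℚ ℝ)) hq
  rw [Polynomial.map_comp] at h1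
  have h2 := congrArg (Polynomial.eval y) h1
  simpa [BB, Polynomial.eval_comp] using h2

lemma BB_eval_one (k : ℕ) (hk : k ≠ 1) : (BB k).eval 1 = (BB k).eval 0 := by
  have h1 : (Polynomial.bernoulli k).eval 1 = (Polynomial.bernoulli k).eval 0 := by
    rw [Polynomial.bernoulli_eval_one, Polynomial.bernoulli_eval_zero,
      bernoulli_eq_bernoulli'_of_ne_one hk]
  have e1 : (BB k).eval 1 = algebraMap ℚ ℝ ((Polynomial.bernoulli k).eval 1) := by
    rw [BB, Polynomial.eval_map, Polynomial.eval₂_at_one]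
  have e0 : (BB k).eval 0 = algebraMap ℚ ℝ ((Polynomial.bernoulli k).eval 0) := by
    rw [BB, Polynomial.eval_map, Polynomial.eval₂_at_zero,
      Polynomial.coeff_zero_eq_eval_zero]
  rw [e1, e0, h1]

/-- FTC for Bernoulli polynomials. -/
lemma BB_integ (k : ℕ) (a b : ℝ) :
    ((k:ℝ)+1) * ∫ t in a..b, (BB k).eval t
      = (BB (k+1)).eval b - (BB (k+1)).eval a := by
  rw [← intervalIntegral.integral_const_mul]
  exact intervalIntegral.integral_eq_sub_of_hasDerivAt
    (fun t _ => BB_deriv k t)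
    ((continuous_const.mul (BB_cont k)).intervalIntegrable a b)

lemma BB_integ01 (k : ℕ) (hk : 1 ≤ k) : (∫ t in (0:ℝ)..1, (BB k).eval t) = 0 := by
  have h := BB_integ k 0 1
  rw [BB_eval_one (k+1) (by omega), sub_self] at h
  have hne : ((k:ℝ)+1) ≠ 0 := by positivity
  exact (mul_eq_zero.mp h).resolve_left hne

/-- IBP step for the convolution integral. -/
lemma lemA (m n : ℕ) (x : ℝ) :
    ((n:ℝ)+2) * ∫ t in (0:ℝ)..1, (BB (m+1)).eval (x - t) * (BB (n+1)).eval t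
      = (BB (m+1)).eval (x-1) * (BB (n+2)).eval 1
        - (BB (m+1)).eval x * (BB (n+2)).eval 0
        + ((m:ℝ)+1) * ∫ t in (0:ℝ)..1, (BB m).eval (x - t) * (BB (n+2)).eval t := by
  have hc1 : Continuous fun t : ℝ => (BB (m+1)).eval (x - t) :=
    (BB_cont (m+1)).comp (continuous_const.sub continuous_id)
  have hc1' : Continuous fun t : ℝ => (BB m).eval (x - t) :=
    (BB_cont m).comp (continuous_const.sub continuous_id)
  have hu : ∀ t ∈ Set.Ioo (min (0:ℝ) 1) (max 0 1),
      HasDerivAt (fun t : ℝ => (BB (m+1)).eval (x - t))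
        (-(((m:ℝ)+1) * (BB m).eval (x - t))) t := by
    intro t _
    have h2 : HasDerivAt (fun t : ℝ => x - t) (-1) t := (hasDerivAt_id t).const_sub x
    have h3 := (BB_deriv m (x - t)).comp t h2
    simpa [Function.comp_def, mul_neg_one] using h3
  have hv : ∀ t ∈ Set.Ioo (min (0:ℝ) 1) (max 0 1),
      HasDerivAt (fun t : ℝ => (BB (n+2)).eval t) (((n:ℝ)+2) * (BB (n+1)).eval t) t :=
    fun t _ => BB_deriv' n t
  have h := intervalIntegral.integral_mul_deriv_eq_deriv_mul_of_hasDerivAt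
    (u := fun t : ℝ => (BB (m+1)).eval (x - t))
    (v := fun t : ℝ => (BB (n+2)).eval t)
    (u' := fun t : ℝ => -(((m:ℝ)+1) * (BB m).eval (x - t)))
    (v' := fun t : ℝ => ((n:ℝ)+2) * (BB (n+1)).eval t)
    (a := (0:ℝ)) (b := 1)
    hc1.continuousOn (BB_cont (n+2)).continuousOn hu hv
    (((continuous_const.mul hc1').neg).intervalIntegrable 0 1)
    ((continuous_const.mul (BB_cont (n+1))).intervalIntegrable 0 1)
  have hL : (∫ t in (0:ℝ)..1, (BB (m+1)).eval (x - t) * (((n:ℝ)+2) * (BB (n+1)).eval t))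
      = ((n:ℝ)+2) * ∫ t in (0:ℝ)..1, (BB (m+1)).eval (x - t) * (BB (n+1)).eval t := by
    rw [← intervalIntegral.integral_const_mul]
    congr 1; funext t; ring
  have hR : (∫ t in (0:ℝ)..1, -(((m:ℝ)+1) * (BB m).eval (x - t)) * (BB (n+2)).eval t)
      = -(((m:ℝ)+1) * ∫ t in (0:ℝ)..1, (BB m).eval (x - t) * (BB (n+2)).eval t) := by
    rw [← intervalIntegral.integral_const_mul, ← intervalIntegral.integral_neg]
    congr 1; funext t; ring
  rw [hL, hR] at h
  rw [h]
  simp only [sub_neg_eq_add]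
  ring

/-- IBP step for the second integral. -/
lemma lemB (m n : ℕ) (x : ℝ) :
    ((n:ℝ)+2) * ∫ t in x..1, (x - t)^(m+1) * (BB (n+1)).eval t
      = (x-1)^(m+1) * (BB (n+2)).eval 1
        + ((m:ℝ)+1) * ∫ t in x..1, (x - t)^m * (BB (n+2)).eval t := by
  have hc1 : Continuous fun t : ℝ => (x - t)^(m+1) :=
    (continuous_const.sub continuous_id).pow (m+1)
  have hc1' : Continuous fun t : ℝ => (x - t)^m :=
    (continuous_const.sub continuous_id).pow m
  have hu : ∀ t ∈ Set.Ioo (min x 1) (max x 1),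
      HasDerivAt (fun t : ℝ => (x - t)^(m+1))
        (-(((m:ℝ)+1) * (x - t)^m)) t := by
    intro t _
    have h2 : HasDerivAt (fun t : ℝ => x - t) (-1) t := (hasDerivAt_id t).const_sub x
    have h3 := (hasDerivAt_pow (m+1) (x - t)).comp t h2
    have h4 : (m+1-1 : ℕ) = m := rfl
    rw [h4] at h3
    push_cast at h3
    simpa [Function.comp_def, mul_neg_one] using h3
  have hv : ∀ t ∈ Set.Ioo (min x 1) (max x 1),
      HasDerivAt (fun t : ℝ => (BB (n+2)).eval t) (((n:ℝ)+2) * (BB (n+1)).eval t) t :=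
    fun t _ => BB_deriv' n t
  have h := intervalIntegral.integral_mul_deriv_eq_deriv_mul_of_hasDerivAt
    (u := fun t : ℝ => (x - t)^(m+1))
    (v := fun t : ℝ => (BB (n+2)).eval t)
    (u' := fun t : ℝ => -(((m:ℝ)+1) * (x - t)^m))
    (v' := fun t : ℝ => ((n:ℝ)+2) * (BB (n+1)).eval t)
    (a := x) (b := 1)
    hc1.continuousOn (BB_cont (n+2)).continuousOn hu hv
    (((continuous_const.mul hc1').neg).intervalIntegrable x 1)
    ((continuous_const.mul (BB_cont (n+1))).intervalIntegrable x 1)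
  have hL : (∫ t in x..1, (x - t)^(m+1) * (((n:ℝ)+2) * (BB (n+1)).eval t))
      = ((n:ℝ)+2) * ∫ t in x..1, (x - t)^(m+1) * (BB (n+1)).eval t := by
    rw [← intervalIntegral.integral_const_mul]
    congr 1; funext t; ring
  have hR : (∫ t in x..1, -(((m:ℝ)+1) * (x - t)^m) * (BB (n+2)).eval t)
      = -(((m:ℝ)+1) * ∫ t in x..1, (x - t)^m * (BB (n+2)).eval t) := by
    rw [← intervalIntegral.integral_const_mul, ← intervalIntegral.integral_neg]
    congr 1; funext t; ring
  rw [hL, hR] at h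
  rw [h]
  simp only [sub_self, zero_pow (show m+1 ≠ 0 by omega)]
  ring

lemma choose_id (m n : ℕ) :
    ((m:ℝ)+2) * ((m+n+3).choose (m+2)) = ((n:ℝ)+2) * ((m+n+3).choose (m+1)) := by
  have hA : (m+n+3).choose (m+2) * (m+2) = (m+n+3) * (m+n+2).choose (m+1) := by
    rw [show m+n+3 = (m+n+2)+1 by ring, show m+2 = (m+1)+1 by ring]
    exact (Nat.add_one_mul_choose_eq (m+n+2) (m+1)).symm
  have hBn : (m+n+3).choose (n+2) * (n+2) = (m+n+3) * (m+n+2).choose (n+1) := by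
    rw [show m+n+3 = (m+n+2)+1 by ring, show n+2 = (n+1)+1 by ring]
    exact (Nat.add_one_mul_choose_eq (m+n+2) (n+1)).symm
  have h3 : (m+n+2).choose (m+1) = (m+n+2).choose (n+1) := by
    have h := Nat.choose_symm (show n+1 ≤ m+n+2 by omega)
    rw [show m+n+2-(n+1) = m+1 by omega] at h
    exact h
  have h4 : (m+n+3).choose (n+2) = (m+n+3).choose (m+1) := by
    have h := Nat.choose_symm (show m+1 ≤ m+n+3 by omega)
    rw [show m+n+3-(m+1) = n+2 by omega] at h
    exact h
  have key : (m+n+3).choose (m+2) * (m+2) = (m+n+3).choose (m+1) * (n+2) := by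
    rw [hA, h3, ← hBn, h4]
  have hc := congrArg (Nat.cast (R := ℝ)) key
  push_cast at hc
  linarith

lemma main (m : ℕ) : ∀ (n : ℕ) (x : ℝ),
    (∫ t in (0:ℝ)..1, (BB (m+1)).eval (x - t) * (BB (n+1)).eval t)
      + ((m:ℝ)+1) * ∫ t in x..1, (x - t)^m * (BB (n+1)).eval t
    = -(BB (m+1+(n+1))).eval x / ((m+1+(n+1)).choose (m+1)) := by
  induction m with
  | zero =>
    intro n x
    have hA := lemA 0 n x
    have hI0 : (∫ t in (0:ℝ)..1, (BB 0).eval (x - t) * (BB (n+2)).eval t)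
        = ∫ t in (0:ℝ)..1, (BB (n+2)).eval t := by
      congr 1; funext t; simp [BB_zero]
    rw [hI0, BB_integ01 (n+2) (by omega)] at hA
    have he1 : (BB (n+2)).eval 1 = (BB (n+2)).eval 0 := BB_eval_one (n+2) (by omega)
    rw [he1] at hA
    have hB1 : (BB 1).eval x = (BB 1).eval (x-1) + 1 := by
      have h := BB_one_add 1 (x-1)
      rw [show (1:ℝ)+(x-1) = x by ring] at h
      simpa using h
    rw [hB1] at hA
    have hJ := BB_integ (n+1) x 1
    rw [show (n+1+1 : ℕ) = n+2 from rfl] at hJ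
    rw [he1] at hJ
    have hJ0 : (∫ t in x..1, (x - t)^0 * (BB (n+1)).eval t)
        = ∫ t in x..1, (BB (n+1)).eval t := by
      congr 1; funext t; simp
    rw [show (0+1+(n+1)) = n+2 by omega, Nat.choose_one_right, hJ0]
    have hn2 : ((n:ℝ)+2) ≠ 0 := by positivity
    push_cast at hJ hA ⊢
    rw [eq_div_iff hn2]
    linear_combination hA + hJ
  | succ m ih =>
    intro n x
    rw [show (m+1+1+(n+1)) = m+n+3 by omega]
    rw [show (m+1+1 : ℕ) = m+2 from rfl]
    have hA := lemA (m+1) n x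
    rw [show (m+1+1 : ℕ) = m+2 from rfl] at hA
    have hB := lemB m n x
    have he1 : (BB (n+2)).eval 1 = (BB (n+2)).eval 0 := BB_eval_one (n+2) (by omega)
    rw [he1] at hA hB
    have hshift : (BB (m+2)).eval x = (BB (m+2)).eval (x-1) + ((m:ℝ)+2) * (x-1)^(m+1) := by
      have h := BB_one_add (m+2) (x-1)
      rw [show (1:ℝ)+(x-1) = x by ring, show (m+2-1 : ℕ) = m+1 from rfl] at h
      push_cast at h
      linarith
    have hih := ih (n+1) x
    rw [show (n+1+1 : ℕ) = n+2 from rfl] at hih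
    rw [show (m+1+(n+2)) = m+n+3 by omega] at hih
    have hch := choose_id m n
    have hC1 : (0:ℝ) < (((m+n+3).choose (m+1)) : ℝ) := by
      exact_mod_cast Nat.choose_pos (by omega)
    have hC2 : (0:ℝ) < (((m+n+3).choose (m+2)) : ℝ) := by
      exact_mod_cast Nat.choose_pos (by omega)
    rw [eq_div_iff (ne_of_gt hC1)] at hih
    rw [eq_div_iff (ne_of_gt hC2)]
    push_cast at hA hB hih hch ⊢
    set C1 := (((m+n+3).choose (m+1)) : ℝ) with hC1def
    set C2 := (((m+n+3).choose (m+2)) : ℝ) with hC2def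
    set I2 := ∫ t in (0:ℝ)..1, (BB (m+2)).eval (x - t) * (BB (n+1)).eval t with hI2
    set I1 := ∫ t in (0:ℝ)..1, (BB (m+1)).eval (x - t) * (BB (n+2)).eval t with hI1
    set J2 := ∫ t in x..1, (x - t)^(m+1) * (BB (n+1)).eval t with hJ2
    set J1 := ∫ t in x..1, (x - t)^m * (BB (n+2)).eval t with hJ1
    set c := (BB (n+2)).eval 0 with hc
    set e := (BB (m+n+3)).eval x with he
    have key : ((n:ℝ)+2) * (I2 + ((m:ℝ)+2) * J2)
        = ((m:ℝ)+2) * (I1 + ((m:ℝ)+1) * J1) := by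
      linear_combination hA + ((m:ℝ)+2) * hB - c * hshift
    have goal2 : ((I2 + ((m:ℝ)+2) * J2) * C2 + e) * (((n:ℝ)+2) * C1) = 0 := by
      linear_combination C1 * C2 * key + ((m:ℝ)+2) * C2 * hih - e * hch
    have hNC : (((n:ℝ)+2) * C1) ≠ 0 := by positivity
    have h5 := (mul_eq_zero.mp goal2).resolve_right hNC
    linarith

theorem stmt_19 (m n : ℕ) (hm : 0 < m) (hn : 0 < n) (x : ℝ) :
    ((Polynomial.bernoulli (m + n)).map (algebraMap ℚ ℝ)).eval x
      = -(Nat.choose (m + n) m : ℝ) *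
        ((∫ t in (0:ℝ)..1,
            ((Polynomial.bernoulli m).map (algebraMap ℚ ℝ)).eval (x - t) *
              ((Polynomial.bernoulli n).map (algebraMap ℚ ℝ)).eval t) +
          m * ∫ t in x..1,
            (x - t) ^ (m - 1) *
              ((Polynomial.bernoulli n).map (algebraMap ℚ ℝ)).eval t) := by
  obtain ⟨m', rfl⟩ : ∃ m', m = m' + 1 := ⟨m - 1, by omega⟩
  obtain ⟨n', rfl⟩ : ∃ n', n = n' + 1 := ⟨n - 1, by omega⟩
  have h := main m' n' x
  simp only [BB] at h
  have hch : (0:ℝ) < (((m'+1+(n'+1)).choose (m'+1) : ℕ) : ℝ) := by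
    exact_mod_cast Nat.choose_pos (by omega)
  rw [show (m'+1-1 : ℕ) = m' from rfl]
  rw [show ((m'+1 : ℕ) : ℝ) = (m' : ℝ)+1 by push_cast; ring]
  rw [h]
  field_simp
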